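/- Let R ∈ ℝ^{m×n}, λ > 0, and u ∈ ℝ^{m×r}, v ∈ ℝ^{n×r} satisfy the first-order conditions R v + λ u = 0 and Rᵀ u + λ v = 0. Then uᵀu = vᵀv (the critical point is balanced). -/
import Mathlib

open Matrix

/-- Balancedness of critical points: if `R v + λ u = 0` and `Rᵀ u + λ v = 0` with `λ > 0`,
then `uᵀ u = vᵀ v`. -/
theorem lora_critical_point_balanced {m n r : ℕ}
    (R : Matrix (Fin m) (Fin n) ℝ) (lam : ℝ) (hlam : 0 < lam)
    (u : Matrix (Fin m) (Fin r) ℝ) (v : Matrix (Fin n) (Fin r) ℝ)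
    (h1 : R * v + lam • u = 0) (h2 : Rᵀ * u + lam • v = 0) :
    uᵀ * u = vᵀ * v := by
  have hRv : R * v = -(lam • u) := by linear_combination (norm := abel) h1
  have hRtu : Rᵀ * u = -(lam • v) := by linear_combination (norm := abel) h2
  have e1 : uᵀ * (R * v) = -(lam • (uᵀ * u)) := by
    rw [hRv]; simp [Matrix.mul_smul]
  have e2 : vᵀ * (Rᵀ * u) = -(lam • (vᵀ * v)) := by
    rw [hRtu]; simp [Matrix.mul_smul]
  have e3 : uᵀ * (R * v) = (vᵀ * (Rᵀ * u))ᵀ := by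
    simp [Matrix.transpose_mul, Matrix.mul_assoc]
  have e4 : -(lam • (uᵀ * u)) = -(lam • (vᵀ * v))ᵀ := by
    rw [← e1, e3, e2]; simp
  have e5 : lam • (uᵀ * u) = lam • (vᵀ * v) := by
    have := neg_injective e4
    rw [this]; simp [Matrix.transpose_smul, Matrix.transpose_mul]
  exact smul_right_injective _ (ne_of_gt hlam) e5
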